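/- Let p ≥ 3, α ∈ ℂ with |e^{α s x^p}| ≤ 1 for all x ∈ ℝ, s ≥ 0, let ν ∈ M(ℝⁿ) and 0 ≤ t₁ < ... < t_n < t. Then ∫_{ℝⁿ} F(x₁,...,x_n) ∏_{k=1}^n G^p_{t_{k+1}-t_k}(x_{k+1}, x_k) dx₁...dx_n = ∫_{ℝⁿ} exp(α ∑_{k=1}^n (∑_{j=1}^k y_j)^p (t_{k+1}-t_k)) dν(y₁,...,y_n), where F is the Fourier transform of ν, x_{n+1} = 0, t_{n+1} = t, and G^p_s(x,y) = g^p_s(x-y) with g^p_s the Fourier transform of k ↦ e^{α s k^p}. -/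

import Mathlib

open MeasureTheory Complex

section AuxLemmas
open Finset

lemma abel_nat (y x : ℕ → ℝ) : ∀ n : ℕ,
    ∑ k ∈ range n, (∑ j ∈ range (k+1), y j) * (x (k+1) - x k)
      = (∑ j ∈ range n, y j) * x n - ∑ k ∈ range n, y k * x k := by
  intro n
  induction n with
  | zero => simp
  | succ n ih =>
    rw [Finset.sum_range_succ, ih, Finset.sum_range_succ (f := fun k => y k * x k),
      Finset.sum_range_succ (f := y)]
    ring

lemma telescope_fin (n : ℕ) (y x : Fin n → ℝ) :
    ∑ k : Fin n, (∑ j ∈ Finset.Iic k, y j) *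
        ((Fin.snoc x (0:ℝ) : Fin (n+1) → ℝ) k.succ - x k)
      = - ∑ k : Fin n, y k * x k := by
  classical
  set y' : ℕ → ℝ := fun j => if h : j < n then y ⟨j, h⟩ else 0 with hy'
  set x' : ℕ → ℝ := fun j => if h : j < n then x ⟨j, h⟩ else 0 with hx'
  have hsnoc : ∀ k : Fin n, (Fin.snoc x (0:ℝ) : Fin (n+1) → ℝ) k.succ = x' ((k:ℕ)+1) := by
    intro k
    simp only [hx', Fin.snoc]
    by_cases h : (k:ℕ)+1 < n
    · simp [h, Fin.castLT]
    · simp [h]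
  have hIic : ∀ k : Fin n, (∑ j ∈ Finset.Iic k, y j) = ∑ j ∈ range ((k:ℕ)+1), y' j := by
    intro k
    have h1 : range ((k:ℕ)+1) = Finset.Iic (k:ℕ) := by ext j; simp [Nat.lt_succ_iff]
    rw [h1, ← Fin.map_valEmbedding_Iic, Finset.sum_map]
    refine Finset.sum_congr rfl fun j _ => ?_
    simp [hy', j.isLt]
  have key : ∀ k : Fin n, (∑ j ∈ Finset.Iic k, y j) *
        ((Fin.snoc x (0:ℝ) : Fin (n+1) → ℝ) k.succ - x k)
      = (fun m => (∑ j ∈ range (m+1), y' j) * (x' (m+1) - x' m)) (k:ℕ) := by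
    intro k
    simp only [hIic, hsnoc]
    congr 1
    simp [hx', k.isLt]
  calc ∑ k : Fin n, (∑ j ∈ Finset.Iic k, y j) *
        ((Fin.snoc x (0:ℝ) : Fin (n+1) → ℝ) k.succ - x k)
      = ∑ k : Fin n, (fun m => (∑ j ∈ range (m+1), y' j) * (x' (m+1) - x' m)) (k:ℕ) :=
        Finset.sum_congr rfl fun k _ => key k
    _ = ∑ k ∈ range n, (∑ j ∈ range (k+1), y' j) * (x' (k+1) - x' k) :=
        Fin.sum_univ_eq_sum_range (fun m => (∑ j ∈ range (m+1), y' j) * (x' (m+1) - x' m)) n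
    _ = (∑ j ∈ range n, y' j) * x' n - ∑ k ∈ range n, y' k * x' k := abel_nat y' x' n
    _ = - ∑ k : Fin n, y k * x k := by
        have : x' n = 0 := by simp [hx']
        rw [this, mul_zero, zero_sub]
        congr 1
        rw [← Fin.sum_univ_eq_sum_range (fun k => y' k * x' k) n]
        refine Finset.sum_congr rfl fun k _ => ?_
        simp [hy', hx', k.isLt]

noncomputable def Amat (n : ℕ) : Matrix (Fin n) (Fin n) ℝ :=
  fun k j => (if (j:ℕ) = (k:ℕ) + 1 then 1 else 0) - (if j = k then 1 else 0)

lemma Amat_apply (n : ℕ) (x : Fin n → ℝ) (k : Fin n) :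
    Matrix.toLin' (Amat n) x k = (Fin.snoc x (0:ℝ) : Fin (n+1) → ℝ) k.succ - x k := by
  classical
  rw [Matrix.toLin'_apply]
  show ∑ j : Fin n, Amat n k j * x j = _
  have h2 : ∑ j : Fin n, (if j = k then (1:ℝ) else 0) * x j = x k := by
    simp [ite_mul]
  have h1 : ∑ j : Fin n, (if (j:ℕ) = (k:ℕ) + 1 then (1:ℝ) else 0) * x j
      = (Fin.snoc x (0:ℝ) : Fin (n+1) → ℝ) k.succ := by
    by_cases h : (k:ℕ) + 1 < n
    · have hcond : ∀ j : Fin n, ((j:ℕ) = (k:ℕ) + 1) ↔ j = ⟨(k:ℕ)+1, h⟩ := by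
        intro j; rw [Fin.ext_iff]
      have hsucc : (k.succ : Fin (n+1)) = (⟨(k:ℕ)+1, h⟩ : Fin n).castSucc := by
        rw [Fin.ext_iff]; simp
      rw [hsucc, Fin.snoc_castSucc]
      simp only [hcond, ite_mul, one_mul, zero_mul]
      simp
    · have hn : (k:ℕ) + 1 = n := Nat.le_antisymm k.isLt (not_lt.1 h)
      have hsucc : (k.succ : Fin (n+1)) = Fin.last n := by
        rw [Fin.ext_iff]; simp [hn]
      rw [hsucc, Fin.snoc_last]
      have hno : ∀ j : Fin n, ¬ ((j:ℕ) = (k:ℕ) + 1) := by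
        intro j hj
        have := j.isLt; omega
      simp [hno]
  simp only [Amat, sub_mul, Finset.sum_sub_distrib, h1, h2]

lemma Amat_det (n : ℕ) : (Amat n).det = (-1)^n := by
  classical
  have h : (Amat n).BlockTriangular id := by
    intro i j hij
    simp only [Amat]
    have h1 : ¬ (j = i) := Fin.ne_of_lt hij
    have h2 : ¬ ((j:ℕ) = (i:ℕ) + 1) := by
      have : (j:ℕ) < (i:ℕ) := hij
      omega
    simp [h1, h2]
  rw [Matrix.det_of_upperTriangular h]
  simp [Amat]

lemma Amat_measurePreserving (n : ℕ) :
    MeasurePreserving (⇑(Matrix.toLin' (Amat n))) volume volume := by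
  constructor
  · exact (LinearMap.continuous_on_pi _).measurable
  · rw [Real.map_matrix_volume_pi_eq_smul_volume_pi
      (by rw [Amat_det]; exact pow_ne_zero _ (by norm_num))]
    rw [Amat_det]
    have h1 : |(((-1:ℝ))^n)⁻¹| = 1 := by
      rw [abs_inv, _root_.abs_pow, abs_neg, abs_one, one_pow, inv_one]
    rw [h1, ENNReal.ofReal_one, one_smul]

lemma Amat_measurableEmbedding (n : ℕ) :
    MeasurableEmbedding (⇑(Matrix.toLin' (Amat n))) := by
  have hdet : IsUnit (Amat n).det := by
    rw [Amat_det]; exact (IsUnit.neg isUnit_one).pow n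
  letI inst : Invertible (Amat n) := (Amat n).invertibleOfIsUnitDet hdet
  have heq : ⇑(Matrix.toLin' (Amat n))
      = ⇑(((Amat n).toLinearEquiv' inst).toContinuousLinearEquiv.toHomeomorph) := by
    rw [← Matrix.toLinearEquiv'_apply (Amat n) inst]
    rfl
  rw [heq]
  exact Homeomorph.measurableEmbedding _


end AuxLemmas

/-- cylindrical function lemma: let `p ≥ 3`, `α` with `|e^{α s x^p}| ≤ 1`,
`ν ∈ M(ℝⁿ)` (represented by an integrable density `ρ` w.r.t. a finite measure `P`),
`0 ≤ t₁ < … < t_n < t_{n+1} = t` (encoded as `ts : Fin (n+1) → ℝ`, `ts k = t_{k+1}`), and let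
`g^p_s = g s` be the fundamental solution kernel: an integrable function with
`∫ e^{-iξy} g s ξ dξ = e^{α s y^p}`, and `G^p_s(x,y) = g s (x-y)`.  Then, with `x_{n+1} = 0`,
`∫_{ℝⁿ} F(x₁,…,x_n) ∏_k G^p_{t_{k+1}-t_k}(x_{k+1},x_k) dx
  = ∫_{ℝⁿ} exp(α ∑_k (∑_{j≤k} y_j)^p (t_{k+1}-t_k)) dν(y)`,
where `F` is the Fourier transform of `ν`. -/
theorem stmt_11 (p : ℕ) (hp : 3 ≤ p) (α : ℂ)
    (hα : ∀ (x s : ℝ), 0 ≤ s → ‖Complex.exp (α * s * x ^ p)‖ ≤ 1)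
    (t : ℝ) (ht : 0 < t) (n : ℕ)
    (ts : Fin (n + 1) → ℝ) (h0 : 0 ≤ ts 0) (hmono : StrictMono ts)
    (hlast : ts (Fin.last n) = t)
    (g : ℝ → ℝ → ℂ) (hgInt : ∀ s : ℝ, 0 < s → Integrable (g s))
    (hgFT : ∀ s : ℝ, 0 < s → ∀ y : ℝ,
      ∫ ξ : ℝ, Complex.exp (-(I * ξ * y)) * g s ξ = Complex.exp (α * s * y ^ p))
    (P : Measure (Fin n → ℝ)) [IsFiniteMeasure P] (ρ : (Fin n → ℝ) → ℂ)
    (hρ : Integrable ρ P) :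
    ∫ x : Fin n → ℝ,
        (∫ y, Complex.exp (I * (∑ k, y k * x k : ℝ)) * ρ y ∂P) *
          ∏ k : Fin n,
            g (ts k.succ - ts k.castSucc)
              ((Fin.snoc x (0:ℝ) : Fin (n + 1) → ℝ) k.succ - (Fin.snoc x (0:ℝ) : Fin (n + 1) → ℝ) k.castSucc) =
      ∫ y, Complex.exp (α * ∑ k : Fin n,
          ((∑ j ∈ Finset.Iic k, y j : ℝ) : ℂ) ^ p *
            ((ts k.succ - ts k.castSucc : ℝ) : ℂ)) * ρ y ∂P := by
  classical
  set T : (Fin n → ℝ) → (Fin n → ℝ) := ⇑(Matrix.toLin' (Amat n)) with hT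
  set s : Fin n → ℝ := fun k => ts k.succ - ts k.castSucc with hs_def
  have hs : ∀ k, 0 < s k := fun k => sub_pos.2 (hmono (Fin.castSucc_lt_succ (i := k)))
  set Y : (Fin n → ℝ) → Fin n → ℝ := fun y k => ∑ j ∈ Finset.Iic k, y j with hY
  set K : (Fin n → ℝ) → ℂ := fun x => ∏ k, g (s k) (T x k) with hKdef
  -- rewrite the product in the LHS as K x
  have hprod : ∀ x : Fin n → ℝ,
      (∏ k : Fin n, g (ts k.succ - ts k.castSucc)
        ((Fin.snoc x (0:ℝ) : Fin (n + 1) → ℝ) k.succ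
          - (Fin.snoc x (0:ℝ) : Fin (n + 1) → ℝ) k.castSucc)) = K x := by
    intro x
    refine Finset.prod_congr rfl fun k _ => ?_
    rw [Fin.snoc_castSucc, hT]
    rw [Amat_apply]
  -- integrability of K
  have hΦint : Integrable (fun ξ : Fin n → ℝ => ∏ k, g (s k) (ξ k)) :=
    Integrable.fintype_prod (fun k => hgInt _ (hs k))
  have hK : Integrable K := by
    have := ((Amat_measurePreserving n).integrable_comp_emb
      (Amat_measurableEmbedding n)).2 hΦint
    exact this
  -- the inner x-integral for fixed y
  have inner : ∀ y : Fin n → ℝ,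
      ∫ x : Fin n → ℝ, Complex.exp (I * (∑ k, y k * x k : ℝ)) * K x
        = Complex.exp (α * ∑ k : Fin n, ((Y y k : ℝ) : ℂ) ^ p * ((s k : ℝ) : ℂ)) := by
    intro y
    have hpt : ∀ x : Fin n → ℝ, Complex.exp (I * (∑ k, y k * x k : ℝ)) * K x
        = (fun ξ : Fin n → ℝ =>
            ∏ k, (Complex.exp (-(I * (ξ k) * (Y y k))) * g (s k) (ξ k))) (T x) := by
      intro x
      simp only
      rw [Finset.prod_mul_distrib, ← Complex.exp_sum]
      have harg : ∑ k : Fin n, -(I * ((T x k : ℝ) : ℂ) * ((Y y k : ℝ) : ℂ))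
          = I * ((∑ k, y k * x k : ℝ) : ℂ) := by
        have htel : ∑ k : Fin n, (Y y k) * (T x k) = - ∑ k, y k * x k := by
          have h1 : ∀ k : Fin n, T x k
              = (Fin.snoc x (0:ℝ) : Fin (n+1) → ℝ) k.succ - x k := fun k => Amat_apply n x k
          simp only [h1, hY]
          exact telescope_fin n y x
        calc ∑ k : Fin n, -(I * ((T x k : ℝ) : ℂ) * ((Y y k : ℝ) : ℂ))
            = -(I * ((∑ k : Fin n, Y y k * T x k : ℝ) : ℂ)) := by
              push_cast
              rw [Finset.mul_sum, ← Finset.sum_neg_distrib]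
              exact Finset.sum_congr rfl fun k _ => by ring
          _ = I * ((∑ k, y k * x k : ℝ) : ℂ) := by
              rw [htel]; push_cast; ring
      rw [harg]
    rw [integral_congr_ae (Filter.Eventually.of_forall hpt)]
    rw [(Amat_measurePreserving n).integral_comp (Amat_measurableEmbedding n)
      (fun ξ : Fin n → ℝ => ∏ k, Complex.exp (-(I * (ξ k) * (Y y k))) * g (s k) (ξ k))]
    rw [volume_pi, integral_fintype_prod_eq_prod
      (f := fun k (ξ : ℝ) => Complex.exp (-(I * ξ * (Y y k))) * g (s k) ξ)]
    have hFT : ∀ k : Fin n, (∫ ξ : ℝ, Complex.exp (-(I * ξ * (Y y k))) * g (s k) ξ)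
        = Complex.exp (α * (s k) * ((Y y k : ℝ) : ℂ) ^ p) := fun k => hgFT (s k) (hs k) (Y y k)
    rw [Finset.prod_congr rfl (fun k _ => hFT k), ← Complex.exp_sum]
    congr 1
    rw [Finset.mul_sum]
    exact Finset.sum_congr rfl fun k _ => by ring
  -- measurability of the exponential factor on the product space
  have emeas : Continuous fun z : (Fin n → ℝ) × (Fin n → ℝ) =>
      Complex.exp (I * ((∑ k, z.2 k * z.1 k : ℝ) : ℂ)) := by
    apply Complex.continuous_exp.comp
    apply Continuous.mul continuous_const
    apply Complex.continuous_ofReal.comp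
    exact continuous_finset_sum _ fun k _ =>
      ((continuous_apply k).comp continuous_snd).mul ((continuous_apply k).comp continuous_fst)
  -- integrability of the full integrand on the product space
  have hint : Integrable (Function.uncurry fun (x y : Fin n → ℝ) =>
      Complex.exp (I * ((∑ k, y k * x k : ℝ) : ℂ)) * ρ y * K x) (volume.prod P) := by
    have hbase : Integrable (fun z : (Fin n → ℝ) × (Fin n → ℝ) => K z.1 * ρ z.2)
        (volume.prod P) := hK.mul_prod hρ
    refine hbase.norm.mono' ?_ ?_
    · exact ((emeas.aestronglyMeasurable).mul hρ.1.comp_snd).mul hK.1.comp_fst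
    · refine Filter.Eventually.of_forall fun z => ?_
      have h1 : ‖Complex.exp (I * ((∑ k, z.2 k * z.1 k : ℝ) : ℂ))‖ = 1 := by
        rw [mul_comm I, Complex.norm_exp_ofReal_mul_I]
      show ‖Complex.exp (I * ((∑ k, z.2 k * z.1 k : ℝ) : ℂ)) * ρ z.2 * K z.1‖
        ≤ ‖K z.1 * ρ z.2‖
      rw [norm_mul, norm_mul, h1, one_mul, norm_mul, mul_comm]
  -- now assemble
  simp only [hprod]
  have step1 : ∀ x : Fin n → ℝ,
      (∫ y, Complex.exp (I * ((∑ k, y k * x k : ℝ) : ℂ)) * ρ y ∂P) * K x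
        = ∫ y, Complex.exp (I * ((∑ k, y k * x k : ℝ) : ℂ)) * ρ y * K x ∂P :=
    fun x => (integral_mul_const _ _).symm
  rw [integral_congr_ae (Filter.Eventually.of_forall step1)]
  rw [MeasureTheory.integral_integral_swap hint]
  have step3 : ∀ y : Fin n → ℝ,
      (∫ x : Fin n → ℝ, Complex.exp (I * ((∑ k, y k * x k : ℝ) : ℂ)) * ρ y * K x)
        = Complex.exp (α * ∑ k : Fin n, ((Y y k : ℝ) : ℂ) ^ p * ((s k : ℝ) : ℂ)) * ρ y := by
    intro y
    have hre : ∀ x : Fin n → ℝ,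
        Complex.exp (I * ((∑ k, y k * x k : ℝ) : ℂ)) * ρ y * K x
          = Complex.exp (I * ((∑ k, y k * x k : ℝ) : ℂ)) * K x * ρ y := fun x => by ring
    rw [integral_congr_ae (Filter.Eventually.of_forall hre), integral_mul_const, inner y]
  rw [integral_congr_ae (Filter.Eventually.of_forall step3)]
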